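/- Let X and Y be nonnegative, independent real-valued random variables on a probability space and let a > 0. Then E[ln(1 + X/(Y + a))] = ∫₀^∞ (e^{−a z}/z)·(1 − E[e^{−z X}])·E[e^{−z Y}] dz. -/

import Mathlib

open MeasureTheory ProbabilityTheory Real

lemma laplace_int {t : ℝ} (ht : 0 < t) :
    ∫ z in Set.Ioi (0:ℝ), Real.exp (-t * z) = 1 / t := by
  have h := integral_exp_neg_mul_rpow (by norm_num : (0:ℝ) < 1) ht
  simp only [Real.rpow_one] at h
  rw [h, show (-1)/(1:ℝ) = -1 by norm_num, Real.rpow_neg_one,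
    show (1:ℝ)/1 + 1 = 2 by norm_num, Real.Gamma_two, mul_one, one_div]

lemma int_exp_interval (z b c : ℝ) (hz : z ≠ 0) :
    ∫ t in b..c, Real.exp (-z * t) = (Real.exp (-z*b) - Real.exp (-z*c)) / z := by
  have h := intervalIntegral.integral_comp_mul_left (a := b) (b := c)
    (fun u => Real.exp u) (neg_ne_zero.mpr hz)
  rw [h, integral_exp]
  rw [smul_eq_mul, inv_neg, div_eq_inv_mul]
  ring

lemma frullani {b c : ℝ} (hb : 0 < b) (hbc : b ≤ c) :
    IntegrableOn (fun z => (Real.exp (-b*z) - Real.exp (-c*z)) / z) (Set.Ioi 0) ∧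
    ∫ z in Set.Ioi (0:ℝ), (Real.exp (-b*z) - Real.exp (-c*z)) / z = Real.log (c / b) := by
  set μ := volume.restrict (Set.Ioi (0:ℝ)) with hμ
  set ν := volume.restrict (Set.Ioc b c) with hν
  have : IsFiniteMeasure ν :=
    ⟨by rw [hν, Measure.restrict_apply_univ]; exact measure_Ioc_lt_top⟩
  have hmem : ∀ᵐ p ∂(μ.prod ν), p ∈ Set.Ioi (0:ℝ) ×ˢ Set.Ioc b c := by
    rw [hμ, hν, Measure.prod_restrict]
    exact ae_restrict_mem (measurableSet_Ioi.prod measurableSet_Ioc)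
  have hmeas : Measurable (Function.uncurry fun z t : ℝ => Real.exp (-t * z)) := by
    apply Real.measurable_exp.comp
    exact (measurable_snd.neg.mul measurable_fst)
  have hint : Integrable (Function.uncurry fun z t : ℝ => Real.exp (-t * z)) (μ.prod ν) := by
    have h1 : Integrable (fun p : ℝ × ℝ => Real.exp (-b * p.1) * 1) (μ.prod ν) :=
      Integrable.mul_prod (exp_neg_integrableOn_Ioi 0 hb) (integrable_const 1)
    refine h1.mono' hmeas.aestronglyMeasurable ?_
    filter_upwards [hmem] with p hp
    obtain ⟨z, t⟩ := p
    obtain ⟨hz, ht⟩ := hp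
    simp only [Function.uncurry_apply_pair, Real.norm_eq_abs, Real.abs_exp, mul_one]
    exact Real.exp_le_exp.mpr (by nlinarith [Set.mem_Ioi.mp hz, ht.1])
  have hswap := integral_integral_swap hint
  have hL : ∀ z ∈ Set.Ioi (0:ℝ),
      (∫ t, Real.exp (-t * z) ∂ν) = (Real.exp (-b*z) - Real.exp (-c*z))/z := by
    intro z hz
    rw [hν, ← intervalIntegral.integral_of_le hbc]
    simp_rw [show ∀ t : ℝ, -t*z = -z*t from fun t => by ring]
    exact int_exp_interval z b c (ne_of_gt hz)
  have hIL : Integrable (fun z => ∫ t, Real.exp (-t*z) ∂ν) μ := hint.integral_prod_left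
  have haeL : (fun z => ∫ t, Real.exp (-t*z) ∂ν)
      =ᵐ[μ] fun z => (Real.exp (-b*z) - Real.exp (-c*z))/z := by
    rw [hμ]; filter_upwards [ae_restrict_mem measurableSet_Ioi] with z hz using hL z hz
  refine ⟨hIL.congr haeL, ?_⟩
  have h1 : ∫ z, (Real.exp (-b*z) - Real.exp (-c*z))/z ∂μ
      = ∫ t, ∫ z, Real.exp (-t*z) ∂μ ∂ν := by
    rw [← integral_congr_ae haeL, hswap]
  rw [h1]
  have haeR : (fun t => ∫ z, Real.exp (-t*z) ∂μ) =ᵐ[ν] fun t => 1/t := by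
    rw [hν]; filter_upwards [ae_restrict_mem measurableSet_Ioc] with t ht
    rw [hμ]; exact laplace_int (lt_trans hb ht.1)
  rw [integral_congr_ae haeR, hν, ← intervalIntegral.integral_of_le hbc, integral_one_div]
  intro h
  rw [Set.uIcc_of_le hbc] at h
  exact absurd h.1 (by linarith)

lemma exp_neg_le_one' {z x : ℝ} (hz : 0 ≤ z) (hx : 0 ≤ x) : Real.exp (-z * x) ≤ 1 := by
  rw [← Real.exp_zero]; exact Real.exp_le_exp.mpr (by nlinarith)

lemma pointwise_eq (a x y z : ℝ) :
    (Real.exp (-a*z)/z) * (1 - Real.exp (-z*x)) * Real.exp (-z*y)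
      = (Real.exp (-(y+a)*z) - Real.exp (-(x+y+a)*z)) / z := by
  rw [show -(y+a)*z = -a*z + -z*y by ring, show -(x+y+a)*z = -a*z + -z*x + -z*y by ring,
    Real.exp_add, Real.exp_add, Real.exp_add]
  ring

lemma frullani_xy {a x y : ℝ} (ha : 0 < a) (hx : 0 ≤ x) (hy : 0 ≤ y) :
    IntegrableOn
      (fun z => (Real.exp (-a*z)/z) * (1 - Real.exp (-z*x)) * Real.exp (-z*y)) (Set.Ioi 0) ∧
    ∫ z in Set.Ioi (0:ℝ), (Real.exp (-a*z)/z) * (1 - Real.exp (-z*x)) * Real.exp (-z*y)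
      = Real.log (1 + x / (y + a)) := by
  have hb : 0 < y + a := by linarith
  have hbc : y + a ≤ x + y + a := by linarith
  obtain ⟨hI, hE⟩ := frullani hb hbc
  have hfun : (fun z => (Real.exp (-a*z)/z) * (1 - Real.exp (-z*x)) * Real.exp (-z*y))
      = fun z => (Real.exp (-(y+a)*z) - Real.exp (-(x+y+a)*z)) / z :=
    funext fun z => pointwise_eq a x y z
  rw [hfun, hE]
  refine ⟨hI, ?_⟩
  congr 1
  field_simp
  ring

/-- For nonnegative independent real random variables `X, Y` and `a > 0`,
`E[ln(1 + X/(Y + a))] = ∫₀^∞ (e^{−a z}/z)·(1 − E[e^{−z X}])·E[e^{−z Y}] dz`. -/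
theorem stmt_1 {Ω : Type*} [MeasureSpace Ω] [IsProbabilityMeasure (ℙ : Measure Ω)]
    (X Y : Ω → ℝ) (hXm : Measurable X) (hYm : Measurable Y)
    (hX : ∀ ω, 0 ≤ X ω) (hY : ∀ ω, 0 ≤ Y ω)
    (hindep : IndepFun X Y) (a : ℝ) (ha : 0 < a) :
    (∫ ω, Real.log (1 + X ω / (Y ω + a))) =
      ∫ z in Set.Ioi (0 : ℝ),
        (Real.exp (-a * z) / z) * (1 - ∫ ω, Real.exp (-z * X ω)) *
          (∫ ω, Real.exp (-z * Y ω)) := by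
  have haY : ∀ ω, 0 < Y ω + a := fun ω => by linarith [hY ω]
  set f : Ω → ℝ → ℝ := fun ω z =>
    (Real.exp (-a*z)/z) * (1 - Real.exp (-z * X ω)) * Real.exp (-z * Y ω) with hf
  -- measurability of uncurried f
  have hfm : Measurable (Function.uncurry f) := by
    refine Measurable.mul (Measurable.mul ?_ ?_) ?_
    · exact (Real.measurable_exp.comp (measurable_snd.const_mul (-a))).div measurable_snd
    · exact measurable_const.sub
        (Real.measurable_exp.comp ((measurable_snd.neg).mul (hXm.comp measurable_fst)))
    · exact Real.measurable_exp.comp ((measurable_snd.neg).mul (hYm.comp measurable_fst))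
  -- nonnegativity
  have hfnn : ∀ ω, ∀ z ∈ Set.Ioi (0:ℝ), 0 ≤ f ω z := by
    intro ω z hz
    have hz' : (0:ℝ) < z := hz
    have h1 : 0 ≤ Real.exp (-a*z)/z := div_nonneg (Real.exp_pos _).le hz'.le
    have h2 : Real.exp (-z * X ω) ≤ 1 := exp_neg_le_one' hz'.le (hX ω)
    exact mul_nonneg (mul_nonneg h1 (by linarith)) (Real.exp_pos _).le
  -- Frullani per ω
  have hfr : ∀ ω, IntegrableOn (f ω) (Set.Ioi 0) ∧
      ∫ z in Set.Ioi (0:ℝ), f ω z = Real.log (1 + X ω / (Y ω + a)) :=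
    fun ω => frullani_xy ha (hX ω) (hY ω)
  -- integrability in ω for fixed z > 0
  have hωint : ∀ z ∈ Set.Ioi (0:ℝ), Integrable (fun ω => f ω z) ℙ := by
    intro z hz
    have hz' : (0:ℝ) < z := hz
    refine Integrable.mono' (integrable_const (Real.exp (-a*z)/z))
      ((hfm.comp (measurable_id.prodMk measurable_const)).aestronglyMeasurable) ?_
    refine Filter.Eventually.of_forall fun ω => ?_
    rw [Real.norm_eq_abs, abs_of_nonneg (hfnn ω z hz)]
    have h1 : 0 ≤ Real.exp (-a*z)/z := div_nonneg (Real.exp_pos _).le hz'.le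
    have h2 : Real.exp (-z * X ω) ≤ 1 := exp_neg_le_one' hz'.le (hX ω)
    have h2' : 0 < Real.exp (-z * X ω) := Real.exp_pos _
    have h3 : Real.exp (-z * Y ω) ≤ 1 := exp_neg_le_one' hz'.le (hY ω)
    have h3' : 0 < Real.exp (-z * Y ω) := Real.exp_pos _
    show (Real.exp (-a*z)/z) * (1 - Real.exp (-z * X ω)) * Real.exp (-z * Y ω)
        ≤ Real.exp (-a*z)/z
    have e1 : (Real.exp (-a*z)/z) * (1 - Real.exp (-z * X ω)) * Real.exp (-z * Y ω)
        ≤ (Real.exp (-a*z)/z) * (1 - Real.exp (-z * X ω)) :=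
      mul_le_of_le_one_right (mul_nonneg h1 (by linarith)) h3
    have e2 : (Real.exp (-a*z)/z) * (1 - Real.exp (-z * X ω)) ≤ Real.exp (-a*z)/z :=
      mul_le_of_le_one_right h1 (by linarith)
    linarith
  -- integrability of the exponentials
  have huint : ∀ z : ℝ, 0 < z → Integrable (fun ω => Real.exp (-z * X ω)) ℙ := by
    intro z hz
    refine Integrable.mono' (integrable_const 1)
      ((Real.measurable_exp.comp (hXm.const_mul (-z))).aestronglyMeasurable)
      (Filter.Eventually.of_forall fun ω => ?_)
    rw [Real.norm_eq_abs, Real.abs_exp]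
    exact exp_neg_le_one' hz.le (hX ω)
  have hvint : ∀ z : ℝ, 0 < z → Integrable (fun ω => Real.exp (-z * Y ω)) ℙ := by
    intro z hz
    refine Integrable.mono' (integrable_const 1)
      ((Real.measurable_exp.comp (hYm.const_mul (-z))).aestronglyMeasurable)
      (Filter.Eventually.of_forall fun ω => ?_)
    rw [Real.norm_eq_abs, Real.abs_exp]
    exact exp_neg_le_one' hz.le (hY ω)
  -- expectation identity for fixed z > 0
  have hgz : ∀ z ∈ Set.Ioi (0:ℝ), (∫ ω, f ω z)
      = (Real.exp (-a*z)/z) * (1 - ∫ ω, Real.exp (-z * X ω)) * (∫ ω, Real.exp (-z * Y ω)) := by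
    intro z hz
    have hz' : (0:ℝ) < z := hz
    have hind : IndepFun (fun ω => Real.exp (-z * X ω)) (fun ω => Real.exp (-z * Y ω)) ℙ :=
      hindep.comp (Real.measurable_exp.comp (measurable_id.const_mul (-z)))
        (Real.measurable_exp.comp (measurable_id.const_mul (-z)))
    have hmul := IndepFun.integral_fun_mul_eq_mul_integral hind
      ((Real.measurable_exp.comp (hXm.const_mul (-z))).aestronglyMeasurable)
      ((Real.measurable_exp.comp (hYm.const_mul (-z))).aestronglyMeasurable)
    have huv : Integrable (fun ω => Real.exp (-z * X ω) * Real.exp (-z * Y ω)) ℙ :=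
      IndepFun.integrable_mul hind (huint z hz') (hvint z hz')
    calc ∫ ω, f ω z
        = ∫ ω, (Real.exp (-a*z)/z) *
            (Real.exp (-z * Y ω) - Real.exp (-z * X ω) * Real.exp (-z * Y ω)) := by
          congr 1; funext ω; simp only [hf]; ring
      _ = (Real.exp (-a*z)/z) *
            ∫ ω, (Real.exp (-z * Y ω) - Real.exp (-z * X ω) * Real.exp (-z * Y ω)) :=
          integral_const_mul _ _
      _ = (Real.exp (-a*z)/z) *
            ((∫ ω, Real.exp (-z * Y ω)) - ∫ ω, Real.exp (-z * X ω) * Real.exp (-z * Y ω)) := by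
          rw [integral_sub (hvint z hz') huv]
      _ = (Real.exp (-a*z)/z) * (1 - ∫ ω, Real.exp (-z * X ω)) * (∫ ω, Real.exp (-z * Y ω)) := by
          rw [hmul]; ring
  -- the key lintegral identity
  have key : ∫⁻ ω, ENNReal.ofReal (Real.log (1 + X ω / (Y ω + a))) ∂ℙ
      = ∫⁻ z in Set.Ioi (0:ℝ), ENNReal.ofReal ((Real.exp (-a*z)/z) *
          (1 - ∫ ω, Real.exp (-z * X ω)) * (∫ ω, Real.exp (-z * Y ω))) := by
    have hswap : ∫⁻ ω, ∫⁻ z in Set.Ioi (0:ℝ), ENNReal.ofReal (f ω z) ∂ℙ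
        = ∫⁻ z in Set.Ioi (0:ℝ), ∫⁻ ω, ENNReal.ofReal (f ω z) ∂ℙ :=
      lintegral_lintegral_swap ((ENNReal.measurable_ofReal.comp hfm).aemeasurable)
    calc ∫⁻ ω, ENNReal.ofReal (Real.log (1 + X ω / (Y ω + a))) ∂ℙ
        = ∫⁻ ω, ∫⁻ z in Set.Ioi (0:ℝ), ENNReal.ofReal (f ω z) ∂ℙ := by
          refine lintegral_congr fun ω => ?_
          rw [← (hfr ω).2, ofReal_integral_eq_lintegral_ofReal (hfr ω).1
            ((ae_restrict_mem measurableSet_Ioi).mono (hfnn ω))]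
      _ = ∫⁻ z in Set.Ioi (0:ℝ), ∫⁻ ω, ENNReal.ofReal (f ω z) ∂ℙ := hswap
      _ = _ := by
          refine lintegral_congr_ae ?_
          filter_upwards [ae_restrict_mem measurableSet_Ioi] with z hz
          rw [← ofReal_integral_eq_lintegral_ofReal (hωint z hz)
            (Filter.Eventually.of_forall fun ω => hfnn ω z hz), hgz z hz]
  -- measurability of the z-integrand
  have hEXm : StronglyMeasurable (fun z => ∫ ω, Real.exp (-z * X ω) ∂ℙ) :=
    StronglyMeasurable.integral_prod_right
      ((Real.measurable_exp.comp ((measurable_fst.neg).mul (hXm.comp measurable_snd))).stronglyMeasurable)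
  have hEYm : StronglyMeasurable (fun z => ∫ ω, Real.exp (-z * Y ω) ∂ℙ) :=
    StronglyMeasurable.integral_prod_right
      ((Real.measurable_exp.comp ((measurable_fst.neg).mul (hYm.comp measurable_snd))).stronglyMeasurable)
  have hgm : AEStronglyMeasurable (fun z => (Real.exp (-a*z)/z) *
      (1 - ∫ ω, Real.exp (-z * X ω)) * (∫ ω, Real.exp (-z * Y ω)))
      (volume.restrict (Set.Ioi 0)) := by
    refine Measurable.aestronglyMeasurable ?_
    exact (((Real.measurable_exp.comp (measurable_id.const_mul (-a))).div measurable_id).mul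
      (measurable_const.sub hEXm.measurable)).mul hEYm.measurable
  -- nonnegativity of the z-integrand on Ioi 0
  have hgnn : 0 ≤ᵐ[volume.restrict (Set.Ioi (0:ℝ))] fun z => (Real.exp (-a*z)/z) *
      (1 - ∫ ω, Real.exp (-z * X ω)) * (∫ ω, Real.exp (-z * Y ω)) := by
    filter_upwards [ae_restrict_mem measurableSet_Ioi] with z hz
    have hz' : (0:ℝ) < z := hz
    have h1 : 0 ≤ Real.exp (-a*z)/z := div_nonneg (Real.exp_pos _).le hz'.le
    have h2 : (∫ ω, Real.exp (-z * X ω)) ≤ 1 := by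
      calc (∫ ω, Real.exp (-z * X ω)) ≤ ∫ _ω : Ω, (1:ℝ) :=
            integral_mono (huint z hz') (integrable_const 1)
              (fun ω => exp_neg_le_one' hz'.le (hX ω))
        _ = 1 := by simp
    have h3 : 0 ≤ ∫ ω, Real.exp (-z * Y ω) :=
      integral_nonneg fun ω => (Real.exp_pos _).le
    exact mul_nonneg (mul_nonneg h1 (by linarith)) h3
  -- nonnegativity and measurability on the ω side
  have hLnn : 0 ≤ᵐ[(ℙ : Measure Ω)] fun ω => Real.log (1 + X ω / (Y ω + a)) :=
    Filter.Eventually.of_forall fun ω => Real.log_nonneg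
      (le_add_of_nonneg_right (div_nonneg (hX ω) (haY ω).le))
  have hLm : AEStronglyMeasurable (fun ω => Real.log (1 + X ω / (Y ω + a))) ℙ :=
    (Real.measurable_log.comp (measurable_const.add (hXm.div (hYm.add_const a)))).aestronglyMeasurable
  rw [integral_eq_lintegral_of_nonneg_ae hLnn hLm,
    integral_eq_lintegral_of_nonneg_ae hgnn hgm, key]
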